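/- Let W : [0,1] → B(H) satisfy the Volterra integral equation W(s) = I + (i/ħ) ∫₀^s K̄(s') W(s') ds' with K̄ continuous and ‖K̄(s)‖ ≤ M. If F(s) = ∫₀^s K̄(s')ds' satisfies ‖F(s)‖ ≤ C/T for all s ∈ [0,1], then ‖W(s) − I‖ ≤ (C/ħT)(1 + (M/ħ) e^{M/ħ}) for all s ∈ [0,1]; in particular W(s) = I + O(1/T). -/

import Mathlib

open MeasureTheory intervalIntegral Set


/-- Let `W` solve the Volterra equation
`W(s) = I + (i/ħ)∫₀ˢ K̄(s')W(s')ds'` with `K̄` continuous and `‖K̄(s)‖ ≤ M`. If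
`F(s) = ∫₀ˢ K̄` satisfies `‖F(s)‖ ≤ C/T`, then
`‖W(s) − I‖ ≤ (C/(ħT))(1 + (M/ħ)e^{M/ħ})` on `[0,1]`; in particular `W(s) = I + O(1/T)`. -/
theorem volterra_solution_near_identity {H : Type*} [NormedAddCommGroup H]
    [InnerProductSpace ℂ H] [CompleteSpace H]
    (hbar T C M : ℝ) (h_hbar : 0 < hbar) (hT : 0 < T)
    (K W : ℝ → (H →L[ℂ] H))
    (hKcont : ContinuousOn K (Set.Icc (0:ℝ) 1))
    (hWcont : ContinuousOn W (Set.Icc (0:ℝ) 1))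
    (hM : ∀ s ∈ Set.Icc (0:ℝ) 1, ‖K s‖ ≤ M)
    (hVolt : ∀ s ∈ Set.Icc (0:ℝ) 1,
      W s = 1 + (Complex.I / (hbar : ℂ)) • (∫ t in (0:ℝ)..s, K t * W t))
    (hF : ∀ s ∈ Set.Icc (0:ℝ) 1, ‖∫ t in (0:ℝ)..s, K t‖ ≤ C / T) :
    ∀ s ∈ Set.Icc (0:ℝ) 1,
      ‖W s - 1‖ ≤ (C / (hbar * T)) * (1 + (M / hbar) * Real.exp (M / hbar)) := by
  have hhne : hbar ≠ 0 := h_hbar.ne'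
  set ε : ℝ := C / (hbar * T) with hεdef
  set k : ℝ := M / hbar with hkdef
  have hM0 : 0 ≤ M := le_trans (norm_nonneg _) (hM 0 ⟨le_rfl, zero_le_one⟩)
  have hk0 : 0 ≤ k := div_nonneg hM0 h_hbar.le
  have hCT : 0 ≤ C / T := by simpa using hF 0 ⟨le_rfl, zero_le_one⟩
  have hC : 0 ≤ C := by
    have := mul_nonneg hCT hT.le
    rwa [div_mul_cancel₀ _ hT.ne'] at this
  have hε0 : 0 ≤ ε := div_nonneg hC (by positivity)
  -- the clamp function
  set p : ℝ → ℝ := fun t => min (max t 0) 1 with hpdef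
  have hp_mem : ∀ t, p t ∈ Set.Icc (0:ℝ) 1 := fun t =>
    ⟨le_min (le_max_right _ _) zero_le_one, min_le_right _ _⟩
  have hp_eq : ∀ t ∈ Set.Icc (0:ℝ) 1, p t = t := fun t ht => by
    simp [hpdef, max_eq_left ht.1, min_eq_left ht.2]
  set g : ℝ → ℝ := fun t => ‖W (p t) - 1‖ with hgdef
  have hgc : Continuous g := by
    have : Continuous p := (continuous_id.max continuous_const).min continuous_const
    exact ((hWcont.sub continuousOn_const).norm).comp_continuous this hp_mem
  have hg0 : ∀ t, 0 ≤ g t := fun t => norm_nonneg _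
  have hgW : ∀ t ∈ Set.Icc (0:ℝ) 1, g t = ‖W t - 1‖ := fun t ht => by
    rw [hgdef]; simp [hp_eq t ht]
  have hnc : ‖(Complex.I / (hbar:ℂ))‖ = 1 / hbar := by
    rw [norm_div, Complex.norm_I, Complex.norm_real, Real.norm_eq_abs, abs_of_pos h_hbar]
  -- key integral inequality
  have key : ∀ t ∈ Set.Icc (0:ℝ) 1, g t ≤ ε + k * ∫ u in (0:ℝ)..t, g u := by
    intro t ht
    obtain ⟨ht0, ht1⟩ := ht
    have hsub : Set.uIcc (0:ℝ) t ⊆ Set.Icc 0 1 := by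
      rw [Set.uIcc_of_le ht0]; exact Set.Icc_subset_Icc le_rfl ht1
    have hKint : IntervalIntegrable K volume 0 t :=
      (hKcont.mono hsub).intervalIntegrable
    have hKW1c : ContinuousOn (fun u => K u * (W u - 1)) (Set.Icc (0:ℝ) 1) :=
      hKcont.mul (hWcont.sub continuousOn_const)
    have h2int : IntervalIntegrable (fun u => K u * (W u - 1)) volume 0 t :=
      (hKW1c.mono hsub).intervalIntegrable
    have hsplit : (∫ u in (0:ℝ)..t, K u * W u)
        = (∫ u in (0:ℝ)..t, K u) + ∫ u in (0:ℝ)..t, K u * (W u - 1) := by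
      rw [← intervalIntegral.integral_add hKint h2int]
      apply intervalIntegral.integral_congr
      intro u _
      simp [mul_sub]
    have hB : ‖∫ u in (0:ℝ)..t, K u * (W u - 1)‖ ≤ M * ∫ u in (0:ℝ)..t, g u := by
      calc ‖∫ u in (0:ℝ)..t, K u * (W u - 1)‖
          ≤ |∫ u in (0:ℝ)..t, M * g u| := by
            apply intervalIntegral.norm_integral_le_abs_of_norm_le (g := fun u => M * g u) _
              (((continuous_const.mul hgc).continuousOn).intervalIntegrable)
            rw [Set.uIoc_of_le ht0]
            filter_upwards [ae_restrict_mem measurableSet_Ioc] with u hu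
            have hu' : u ∈ Set.Icc (0:ℝ) 1 := ⟨hu.1.le, hu.2.trans ht1⟩
            rw [hgW u hu']
            exact le_trans (norm_mul_le _ _)
              (mul_le_mul_of_nonneg_right (hM u hu') (norm_nonneg _))
        _ = ∫ u in (0:ℝ)..t, M * g u :=
            abs_of_nonneg (intervalIntegral.integral_nonneg ht0
              (fun u _ => mul_nonneg hM0 (hg0 u)))
        _ = M * ∫ u in (0:ℝ)..t, g u := by
            rw [← intervalIntegral.integral_const_mul]
    rw [hgW t ⟨ht0, ht1⟩, hVolt t ⟨ht0, ht1⟩, add_sub_cancel_left, hsplit, smul_add]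
    calc ‖(Complex.I / (hbar:ℂ)) • (∫ u in (0:ℝ)..t, K u)
            + (Complex.I / (hbar:ℂ)) • (∫ u in (0:ℝ)..t, K u * (W u - 1))‖
        ≤ ‖(Complex.I / (hbar:ℂ)) • (∫ u in (0:ℝ)..t, K u)‖
            + ‖(Complex.I / (hbar:ℂ)) • (∫ u in (0:ℝ)..t, K u * (W u - 1))‖ :=
          norm_add_le _ _
      _ = (1/hbar) * ‖∫ u in (0:ℝ)..t, K u‖
            + (1/hbar) * ‖∫ u in (0:ℝ)..t, K u * (W u - 1)‖ := by
          rw [norm_smul, norm_smul, hnc]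
      _ ≤ (1/hbar) * (C/T) + (1/hbar) * (M * ∫ u in (0:ℝ)..t, g u) :=
          add_le_add (mul_le_mul_of_nonneg_left (hF t ⟨ht0, ht1⟩) (by positivity))
            (mul_le_mul_of_nonneg_left hB (by positivity))
      _ = ε + k * ∫ u in (0:ℝ)..t, g u := by
          rw [hεdef, hkdef]; field_simp
  -- Grönwall
  set f : ℝ → ℝ := fun t => ∫ u in (0:ℝ)..t, g u with hfdef
  have hder : ∀ x, HasDerivAt f (g x) x := fun x =>
    (hgc.integral_hasStrictDerivAt 0 x).hasDerivAt
  have hfn : ∀ t, 0 ≤ t → 0 ≤ f t := fun t ht =>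
    intervalIntegral.integral_nonneg ht (fun u _ => hg0 u)
  have hgron : ∀ x ∈ Set.Icc (0:ℝ) 1, ‖f x‖ ≤ gronwallBound 0 k ε (x - 0) := by
    apply norm_le_gronwallBound_of_norm_deriv_right_le
      (fun x _ => (hder x).continuousAt.continuousWithinAt)
      (fun x _ => (hder x).hasDerivWithinAt)
    · simp [hfdef]
    · intro x hx
      rw [Real.norm_eq_abs, abs_of_nonneg (hg0 x), Real.norm_eq_abs,
        abs_of_nonneg (hfn x hx.1)]
      have := key x ⟨hx.1, hx.2.le⟩
      linarith
  -- conclusion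
  intro s hs
  rw [← hgW s hs]
  have h1 : g s ≤ ε + k * f s := key s hs
  have h2 : f s ≤ gronwallBound 0 k ε (s - 0) := by
    have := hgron s hs
    rwa [Real.norm_eq_abs, abs_of_nonneg (hfn s hs.1)] at this
  have h3 : g s ≤ ε + k * gronwallBound 0 k ε (s - 0) := by
    refine h1.trans (add_le_add_right (mul_le_mul_of_nonneg_left h2 hk0) ε)
  refine h3.trans ?_
  rcases eq_or_lt_of_le hk0 with hk | hk
  · rw [← hk]
    simp [gronwallBound_K0]
  · rw [gronwallBound_of_K_ne_0 hk.ne']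
    have hks : Real.exp (k * (s - 0)) ≤ Real.exp k := by
      apply Real.exp_le_exp.2
      nlinarith [hs.1, hs.2]
    have he1 : (1 - k) * Real.exp k ≤ 1 := by
      have h := mul_le_mul_of_nonneg_right (Real.add_one_le_exp (-k)) (Real.exp_pos k).le
      rw [← Real.exp_add] at h
      simp at h
      linarith
    have hepos := Real.exp_pos k
    have hq : ε + k * (0 * Real.exp (k * (s - 0)) + ε / k * (Real.exp (k * (s - 0)) - 1))
        = ε * Real.exp (k * (s - 0)) := by
      field_simp
      ring
    rw [hq]
    have : ε * Real.exp (k * (s - 0)) ≤ ε * Real.exp k :=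
      mul_le_mul_of_nonneg_left hks hε0
    refine this.trans ?_
    nlinarith
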